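/- In the C*-algebra C*(S) generated by the unilateral shift S on ℓ²(ℤ₊), for every complex polynomial p one has ‖p(S)‖ = sup_{|λ|=1} |p(λ)|. In particular, the quotient map C*(S) → C*(S)/K(ℓ²(ℤ₊)) ≅ C(𝕋) is isometric on the (non-selfadjoint) algebra of polynomials in S. -/

import Mathlib

open scoped ENNReal

/-- ℓ²(ℤ₊) -/
noncomputable abbrev L2 : Type := lp (fun _ : ℕ => ℂ) 2

/-- standard basis vector e_n -/
noncomputable def e (n : ℕ) : L2 := lp.single 2 n 1

/-- ℓ²(ℤ) -/
noncomputable abbrev Z2 : Type := lp (fun _ : ℤ => ℂ) 2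

lemma single_eq_smul' (f : L2) (i : ℕ) : lp.single 2 i (f i) = (f i) • e i := by
  rw [e, ← lp.single_smul, smul_eq_mul, mul_one]

lemma clm_ext_basis {X : Type*} [NormedAddCommGroup X] [NormedSpace ℂ X]
    {T T' : L2 →L[ℂ] X} (h : ∀ n, T (e n) = T' (e n)) : T = T' := by
  ext f
  have hs := lp.hasSum_single (E := fun _ : ℕ => ℂ) (p := 2) (by norm_num) f
  have h1 : HasSum (fun i => T (lp.single 2 i (f i))) (T f) := hs.mapL T
  have h2 : HasSum (fun i => T' (lp.single 2 i (f i))) (T' f) := hs.mapL T'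
  refine h1.unique (h2.congr_fun fun i => ?_)
  rw [single_eq_smul', map_smul, map_smul, h]

lemma memℓp_shift {f : ℤ → ℂ} (hf : Memℓp f 2) : Memℓp (fun n => f (n - 1)) 2 := by
  apply memℓp_gen
  exact ((Equiv.subRight (1 : ℤ)).summable_iff
      (f := fun n : ℤ => ‖f n‖ ^ (2 : ℝ≥0∞).toReal)).2 (hf.summable (by norm_num))

lemma memℓp_unshift {f : ℤ → ℂ} (hf : Memℓp f 2) : Memℓp (fun n => f (n + 1)) 2 := by
  apply memℓp_gen
  exact ((Equiv.addRight (1 : ℤ)).summable_iff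
      (f := fun n : ℤ => ‖f n‖ ^ (2 : ℝ≥0∞).toReal)).2 (hf.summable (by norm_num))

/-- the bilateral shift, as a linear isometric equivalence of ℓ²(ℤ) -/
noncomputable def shiftE : Z2 ≃ₗᵢ[ℂ] Z2 where
  toLinearEquiv :=
    { toFun := fun f => ⟨fun n => f (n - 1), memℓp_shift (lp.memℓp f)⟩
      invFun := fun f => ⟨fun n => f (n + 1), memℓp_unshift (lp.memℓp f)⟩
      map_add' := by intro f g; apply Subtype.ext; funext n; rfl
      map_smul' := by intro c f; apply Subtype.ext; funext n; rfl
      left_inv := by intro f; apply Subtype.ext; funext n; simp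
      right_inv := by intro f; apply Subtype.ext; funext n; simp }
  norm_map' := by
    intro f
    rw [lp.norm_eq_tsum_rpow (by norm_num) f, lp.norm_eq_tsum_rpow (by norm_num)]
    congr 1
    exact (Equiv.subRight (1 : ℤ)).tsum_eq (f := fun n : ℤ => ‖f n‖ ^ (2 : ℝ≥0∞).toReal)

noncomputable def Uu : unitary (Z2 →L[ℂ] Z2) :=
  (Unitary.linearIsometryEquiv (𝕜 := ℂ) (H := Z2)).symm shiftE

/-- the bilateral shift as a continuous linear map -/
noncomputable def Up : Z2 →L[ℂ] Z2 := (Uu : Z2 →L[ℂ] Z2)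

lemma Up_apply (f : Z2) : Up f = shiftE f := by
  have : (Uu : Z2 →L[ℂ] Z2) = (shiftE : Z2 →L[ℂ] Z2) :=
    Unitary.coe_symm_linearIsometryEquiv_apply shiftE
  rw [Up, this]; rfl

lemma Up_mem : Up ∈ unitary (Z2 →L[ℂ] Z2) := Uu.property

lemma commute_smul_left' {A : Type*} [Ring A] [Algebra ℂ A] {a b : A} (h : Commute a b) (c : ℂ) :
    Commute (c • a) b := by
  show c • a * b = b * (c • a)
  rw [smul_mul_assoc, h.eq, mul_smul_comm]

open Polynomial in
lemma isStarNormal_aeval_up (p : ℂ[X]) : IsStarNormal (aeval Up p) := by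
  constructor
  have hc : Commute (star Up) Up := by
    show star Up * Up = Up * star Up
    rw [Unitary.star_mul_self_of_mem Up_mem, Unitary.mul_star_self_of_mem Up_mem]
  rw [Polynomial.aeval_eq_sum_range, star_sum]
  have hterm : ∀ i, star (p.coeff i • Up ^ i) = star (p.coeff i) • (star Up) ^ i := by
    intro i; rw [star_smul, star_pow]
  simp only [hterm]
  refine Commute.sum_left _ _ _ fun i _ => Commute.sum_right _ _ _ fun j _ => ?_
  exact (commute_smul_left' (commute_smul_left' (hc.pow_pow i j) (star (p.coeff i))).symm
    (p.coeff j)).symm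

instance : Nontrivial Z2 :=
  ⟨lp.single 2 (0 : ℤ) 1, 0, by
    intro h
    have := congrArg (fun f : Z2 => (f : ℤ → ℂ) 0) h
    simp [lp.single_apply_self] at this⟩

open Polynomial in
lemma bddAbove_abs_eval (p : ℂ[X]) :
    BddAbove (Set.range fun z : Circle => ‖p.eval (z : ℂ)‖) :=
  (isCompact_range (by
    have h1 : Continuous fun z : Circle => (z : ℂ) := continuous_induced_dom
    exact continuous_norm.comp ((p.continuous_aeval).comp h1))).bddAbove

open Polynomial in
lemma abs_eval_le_csupr (p : ℂ[X]) {lam : ℂ} (hlam : lam ∈ Metric.sphere (0 : ℂ) 1) :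
    ‖p.eval lam‖ ≤ ⨆ z : Circle, ‖p.eval (z : ℂ)‖ := by
  have : lam ∈ Submonoid.unitSphere ℂ := hlam
  exact le_ciSup (bddAbove_abs_eval p) (⟨lam, this⟩ : Circle)

open Polynomial in
lemma up_norm_le (p : ℂ[X]) :
    ‖aeval Up p‖ ≤ ⨆ z : Circle, ‖p.eval (z : ℂ)‖ := by
  set C := ⨆ z : Circle, ‖p.eval (z : ℂ)‖ with hC
  have hCnonneg : 0 ≤ C := Real.iSup_nonneg fun z => norm_nonneg _
  have := isStarNormal_aeval_up p
  have h1 : spectralRadius ℂ (aeval Up p) = ‖aeval Up p‖₊ :=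
    IsStarNormal.spectralRadius_eq_nnnorm _
  have h2 : spectralRadius ℂ (aeval Up p) ≤ ENNReal.ofReal C := by
    rw [spectralRadius]
    refine iSup₂_le fun k hk => ?_
    rw [spectrum.map_polynomial_aeval Up p] at hk
    obtain ⟨lam, hlam, rfl⟩ := hk
    have hsph : lam ∈ Metric.sphere (0 : ℂ) 1 :=
      Unitary.spectrum_subset_circle (𝕜 := ℂ) Uu hlam
    refine (le_of_eq (ofReal_norm _).symm).trans ?_
    exact ENNReal.ofReal_le_ofReal (by simpa using abs_eval_le_csupr p hsph)
  rw [h1] at h2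
  have h3 := ENNReal.toReal_mono (by simp) h2
  simpa [ENNReal.toReal_ofReal hCnonneg] using h3

/-- image of a basis vector under the inclusion ℓ²(ℤ₊) → ℓ²(ℤ) -/
lemma Jc_e (J : L2 →ₗᵢ[ℂ] Z2)
    (hJ : ∀ f : L2, (J f : ℤ → ℂ) = fun n => if 0 ≤ n then f n.toNat else 0)
    (n : ℕ) : J (e n) = lp.single 2 (n : ℤ) 1 := by
  apply Subtype.ext; funext m
  rw [hJ]
  dsimp only
  by_cases hmn : m = (n : ℤ)
  · subst hmn
    simp only [Int.ofNat_nonneg, if_pos, Int.toNat_natCast]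
    rw [e, lp.single_apply_self, lp.single_apply_self]
  · rw [lp.single_apply_ne 2 _ _ hmn]
    by_cases h : 0 ≤ m
    · rw [if_pos h]
      have hne : m.toNat ≠ n := fun hc => hmn (by rw [← hc, Int.toNat_of_nonneg h])
      rw [e]; exact lp.single_apply_ne 2 _ _ hne
    · rw [if_neg h]

lemma shiftE_apply (f : Z2) (n : ℤ) : (shiftE f : ℤ → ℂ) n = f (n - 1) := rfl

lemma Up_single (i : ℤ) : Up (lp.single 2 i 1) = lp.single 2 (i + 1) 1 := by
  rw [Up_apply]
  apply Subtype.ext; funext n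
  rw [shiftE_apply]
  by_cases h : n = i + 1
  · subst h
    simp only [add_sub_cancel_right]
    rw [lp.single_apply_self, lp.single_apply_self]
  · rw [lp.single_apply_ne 2 _ _ h, lp.single_apply_ne 2 _ _ (fun hc : n - 1 = i => h (by omega))]

lemma w_summable {μ : ℂ} (hμ : ‖μ‖ < 1) :
    Summable fun n : ℕ => ‖(starRingEnd ℂ μ) ^ n‖ ^ (2 : ℝ≥0∞).toReal := by
  have h2 : ((2 : ℝ≥0∞)).toReal = ((2 : ℕ) : ℝ) := by norm_num
  refine Summable.congr (f := fun n => (‖μ‖ ^ 2) ^ n) ?_ ?_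
  · exact summable_geometric_of_lt_one (by positivity)
      (pow_lt_one₀ (norm_nonneg μ) hμ (by norm_num))
  · intro n
    rw [norm_pow, RCLike.norm_conj, h2, Real.rpow_natCast, ← pow_mul, ← pow_mul, mul_comm]

lemma ext_summable {f : ℕ → ℂ} (hf : Memℓp f 2) :
    Summable fun n : ℤ => ‖if 0 ≤ n then f n.toNat else 0‖ ^ (2 : ℝ≥0∞).toReal := by
  have hg : Function.Injective (fun k : ℕ => (k : ℤ)) := fun a b h => Int.natCast_inj.mp h
  refine (hg.summable_iff ?_).1 ?_
  · intro x hx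
    have hx' : ¬(0 ≤ x) := fun h0 => hx ⟨x.toNat, by simp [Int.toNat_of_nonneg h0]⟩
    simp [hx', Real.zero_rpow (by norm_num : (2 : ℝ≥0∞).toReal ≠ 0)]
  · have := hf.summable (p := 2) (by norm_num)
    refine this.congr fun k => ?_
    simp

lemma memℓp_ext {f : ℕ → ℂ} (hf : Memℓp f 2) :
    Memℓp (fun n : ℤ => if 0 ≤ n then f n.toNat else 0) 2 :=
  memℓp_gen (ext_summable hf)

lemma ext_tsum (f : ℕ → ℂ) :
    ∑' n : ℤ, ‖if 0 ≤ n then f n.toNat else 0‖ ^ (2 : ℝ≥0∞).toReal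
      = ∑' k : ℕ, ‖f k‖ ^ (2 : ℝ≥0∞).toReal := by
  have hg : Function.Injective (fun k : ℕ => (k : ℤ)) := fun a b h => Int.natCast_inj.mp h
  rw [← hg.tsum_eq
      (f := fun n : ℤ => ‖if 0 ≤ n then f n.toNat else 0‖ ^ (2 : ℝ≥0∞).toReal) ?_]
  · exact tsum_congr fun k => by simp
  · intro x hx
    by_contra hr
    have hx' : ¬(0 ≤ x) := fun h0 => hr ⟨x.toNat, by simp [Int.toNat_of_nonneg h0]⟩
    exact (Function.mem_support.1 hx)
      (by simp [hx', Real.zero_rpow (by norm_num : (2 : ℝ≥0∞).toReal ≠ 0)])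

/-- the inclusion ℓ²(ℤ₊) → ℓ²(ℤ) -/
noncomputable def Jdef : L2 →ₗᵢ[ℂ] Z2 where
  toLinearMap :=
    { toFun := fun f => (⟨fun n => if 0 ≤ n then f n.toNat else 0,
        memℓp_ext (lp.memℓp f)⟩ : Z2)
      map_add' := by
        intro f g; apply Subtype.ext; funext n
        simp only [lp.coeFn_add, Pi.add_apply]
        by_cases h : 0 ≤ n <;> simp [h]
      map_smul' := by
        intro c f; apply Subtype.ext; funext n
        simp only [lp.coeFn_smul, Pi.smul_apply, RingHom.id_apply]
        by_cases h : 0 ≤ n <;> simp [h] }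
  norm_map' := by
    rintro ⟨f, hf⟩
    rw [lp.norm_eq_tsum_rpow (by norm_num), lp.norm_eq_tsum_rpow (by norm_num)]
    congr 1
    exact ext_tsum f

instance : Nontrivial L2 :=
  ⟨lp.single 2 (0 : ℕ) 1, 0, by
    intro h
    have := congrArg (fun f : L2 => (f : ℕ → ℂ) 0) h
    simp [lp.single_apply_self] at this⟩

/-- for the unilateral shift S, ‖p(S)‖ = sup_{|λ|=1} |p(λ)| for every
complex polynomial p; i.e. the quotient map onto C(𝕋) is isometric on polynomials in S. -/
theorem shift_polynomial_norm
    (S : L2 →L[ℂ] L2) (hS : ∀ n : ℕ, S (e n) = e (n + 1))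
    (p : Polynomial ℂ) :
    ‖Polynomial.aeval S p‖ = ⨆ z : Circle, ‖p.eval (z : ℂ)‖ := by
  classical
  set J : L2 →ₗᵢ[ℂ] Z2 := Jdef with hJdef
  have hJ : ∀ f : L2, (J f : ℤ → ℂ) = fun n => if 0 ≤ n then f n.toNat else 0 := fun f => rfl
  set Jc : L2 →L[ℂ] Z2 := J.toContinuousLinearMap with hJc
  have hJcapp : ∀ f, Jc f = J f := fun f => rfl
  -- intertwining
  have hcomm : ∀ x, Jc (S x) = Up (Jc x) := by
    have heq : Jc.comp S = Up.comp Jc := by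
      apply clm_ext_basis
      intro n
      simp only [ContinuousLinearMap.comp_apply, hS, hJcapp, Jc_e J hJ, Up_single]
      rw [show ((n + 1 : ℕ) : ℤ) = (n : ℤ) + 1 by push_cast; ring]
    intro x
    exact DFunLike.congr_fun heq x
  have hpow : ∀ (k : ℕ) (x : L2), Jc ((S ^ k) x) = (Up ^ k) (Jc x) := by
    intro k
    induction k with
    | zero => intro x; simp
    | succ k ih =>
      intro x
      have h1 : (S ^ (k + 1)) x = (S ^ k) (S x) := by
        rw [pow_succ, ContinuousLinearMap.mul_apply]
      rw [h1, ih (S x), hcomm x, pow_succ, ContinuousLinearMap.mul_apply]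
  have haeval : ∀ x, Jc ((Polynomial.aeval S p) x) = (Polynomial.aeval Up p) (Jc x) := by
    intro x
    rw [Polynomial.aeval_eq_sum_range (p := p) S, Polynomial.aeval_eq_sum_range (p := p) Up]
    simp only [ContinuousLinearMap.sum_apply, ContinuousLinearMap.smul_apply, map_sum,
      map_smul]
    exact Finset.sum_congr rfl fun i _ => by rw [hpow i x]
  have hnorm1 : ‖Polynomial.aeval S p‖ ≤ ‖Polynomial.aeval Up p‖ := by
    refine ContinuousLinearMap.opNorm_le_bound _ (norm_nonneg _) fun x => ?_
    calc ‖(Polynomial.aeval S p) x‖ = ‖Jc ((Polynomial.aeval S p) x)‖ := (J.norm_map _).symm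
      _ = ‖(Polynomial.aeval Up p) (Jc x)‖ := by rw [haeval]
      _ ≤ ‖Polynomial.aeval Up p‖ * ‖Jc x‖ := ContinuousLinearMap.le_opNorm _ _
      _ = ‖Polynomial.aeval Up p‖ * ‖x‖ := by rw [hJcapp, J.norm_map]
  -- lower bound: the closed unit disc is contained in the spectrum of S
  have hball : ∀ μ : ℂ, ‖μ‖ < 1 → μ ∈ spectrum ℂ S := by
    intro μ hμ
    rw [spectrum.mem_iff]
    intro hunit
    set w : L2 := ⟨fun n => (starRingEnd ℂ μ) ^ n, memℓp_gen (w_summable hμ)⟩ with hw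
    set T : L2 →L[ℂ] L2 := algebraMap ℂ (L2 →L[ℂ] L2) μ - S with hT
    have hTe : ∀ k, T (e k) = μ • e k - e (k + 1) := by
      intro k
      rw [hT, ContinuousLinearMap.sub_apply, hS, Algebra.algebraMap_eq_smul_one,
        ContinuousLinearMap.smul_apply, ContinuousLinearMap.one_apply]
    have hwe : ∀ j : ℕ, inner (𝕜 := ℂ) w (e j) = μ ^ j := by
      intro j
      rw [e, lp.inner_single_right]
      have : (w : ℕ → ℂ) j = (starRingEnd ℂ μ) ^ j := rfl
      rw [RCLike.inner_apply, this, map_pow, Complex.conj_conj, one_mul]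
    have hφ : ∀ x, inner (𝕜 := ℂ) w (T x) = 0 := by
      have heq : (innerSL ℂ w).comp T = (0 : L2 →L[ℂ] ℂ) := by
        apply clm_ext_basis
        intro n
        simp only [ContinuousLinearMap.comp_apply, hTe, innerSL_apply_apply,
          ContinuousLinearMap.zero_apply]
        rw [inner_sub_right, inner_smul_right, hwe, hwe, pow_succ]
        ring
      intro x
      have := DFunLike.congr_fun heq x
      simpa using this
    obtain ⟨u, hu⟩ := hunit
    have hx := hφ ((↑u⁻¹ : L2 →L[ℂ] L2) w)
    have hTw : T ((↑u⁻¹ : L2 →L[ℂ] L2) w) = w := by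
      rw [← ContinuousLinearMap.mul_apply, ← hu, ← Units.val_mul, mul_inv_cancel,
        Units.val_one, ContinuousLinearMap.one_apply]
    rw [hTw, inner_self_eq_zero] at hx
    have h0 : (w : ℕ → ℂ) 0 = 1 := by rw [hw]; simp
    rw [hx] at h0
    simp [lp.coeFn_zero] at h0
  have hsub : Metric.closedBall (0 : ℂ) 1 ⊆ spectrum ℂ S := by
    rw [← closure_ball (0 : ℂ) one_ne_zero]
    refine closure_minimal ?_ (spectrum.isClosed S)
    intro μ hμ
    exact hball μ (by simpa [mem_ball_zero_iff] using hμ)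
  have hlow : ∀ z : Circle, ‖p.eval (z : ℂ)‖ ≤ ‖Polynomial.aeval S p‖ := by
    intro z
    have hz1 : ‖(z : ℂ)‖ = 1 := mem_sphere_zero_iff_norm.1 z.property
    have hz : (z : ℂ) ∈ spectrum ℂ S := hsub (by simp [Metric.mem_closedBall, hz1,
      dist_zero_right, hz1.le])
    have hmem : p.eval (z : ℂ) ∈ spectrum ℂ (Polynomial.aeval S p) :=
      spectrum.subset_polynomial_aeval S p ⟨(z : ℂ), hz, rfl⟩
    simpa using spectrum.norm_le_norm_of_mem hmem
  exact le_antisymm (hnorm1.trans (up_norm_le p)) (ciSup_le hlow)
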